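/- Let U, A, A′ be n×n matrices over a commutative ring K, with A and A′ alternating. Then there exist an element r ∈ K and an n×n matrix C over K such that A·adj(U)·A′ = r·Uᵀ + Uᵀ·C·Uᵀ. In particular, A·adj(U)·A′ is both left- and right-divisible by Uᵀ. -/

import Mathlib

open Matrix Finset

set_option maxHeartbeats 1000000
set_option synthInstance.maxHeartbeats 400000

namespace Stmt4

variable {n' : ℕ} {S : Type*} [CommRing S]

lemma det_updateColumn_expand (M : Matrix (Fin n') (Fin n') S) (j : Fin n') (w : Fin n' → S) :
    (M.updateCol j w).det = ∑ a, w a * (M.updateCol j (Pi.single a 1)).det := by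
  have h1 : (M.updateCol j w).det = cramer M w j := (cramer_apply _ _ _).symm
  have hw : w = ∑ a, w a • (Pi.single a (1 : S) : Fin n' → S) := by
    funext b
    simp [Pi.single_apply, Finset.sum_ite_eq', mul_comm]
  rw [h1]
  conv_lhs => rw [hw]
  rw [map_sum]
  simp only [_root_.map_smul, Finset.sum_apply, Pi.smul_apply, smul_eq_mul]
  refine Finset.sum_congr rfl fun a _ => ?_
  rw [cramer_apply]

lemma det_one_updateColumn (c : Fin n') (v : Fin n' → S) :
    ((1 : Matrix (Fin n') (Fin n') S).updateCol c v).det = v c := by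
  rw [← cramer_apply, cramer_one]
  rfl

omit [CommRing S] in
lemma updateColumn_comm [Zero S] {c1 c2 : Fin n'} (h : c1 ≠ c2) (M : Matrix (Fin n') (Fin n') S)
    (v w : Fin n' → S) :
    (M.updateCol c1 v).updateCol c2 w = (M.updateCol c2 w).updateCol c1 v := by
  ext i j
  simp only [updateCol_apply]
  split_ifs with h1 h2 <;> simp_all

/-- the matrix `1` with column `c1` replaced by `v` and then column `c2` by `Pi.single a 1`,
for `a = c1`: swapping columns `c1, c2` yields `1` with column `c2` replaced by `v`. -/
lemma swap_aux {c1 c2 : Fin n'} (h : c1 ≠ c2) (v : Fin n' → S) :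
    (((1 : Matrix (Fin n') (Fin n') S).updateCol c1 v).updateCol c2
        (Pi.single c1 1)).submatrix id ⇑(Equiv.swap c1 c2)
      = (1 : Matrix (Fin n') (Fin n') S).updateCol c2 v := by
  ext i j
  simp only [submatrix_apply, id_eq, updateCol_apply, Equiv.swap_apply_def]
  split_ifs <;> simp_all [one_apply, Pi.single_apply]

lemma det_one_updateColumn_two {c1 c2 : Fin n'} (h : c1 ≠ c2) (v w : Fin n' → S) :
    (((1 : Matrix (Fin n') (Fin n') S).updateCol c1 v).updateCol c2 w).det
      = v c1 * w c2 - v c2 * w c1 := by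
  rw [det_updateColumn_expand]
  have base : ∀ a : Fin n',
      (((1 : Matrix (Fin n') (Fin n') S).updateCol c1 v).updateCol c2 (Pi.single a 1)).det
        = if a = c2 then v c1 else if a = c1 then -(v c2) else 0 := by
    intro a
    by_cases ha2 : a = c2
    · subst ha2
      rw [if_pos rfl]
      have hcol : (Pi.single a (1:S) : Fin n' → S)
          = fun j => ((1 : Matrix (Fin n') (Fin n') S).updateCol c1 v) j a := by
        funext j
        rw [Matrix.updateCol_ne h.symm]
        simp [Pi.single_apply, one_apply]
      rw [hcol, updateCol_eq_self, det_one_updateColumn]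
    · rw [if_neg ha2]
      by_cases ha1 : a = c1
      · subst ha1
        rw [if_pos rfl]
        have hdet := Matrix.det_permute' (Equiv.swap a c2)
          (((1 : Matrix (Fin n') (Fin n') S).updateCol a v).updateCol c2 (Pi.single a 1))
        rw [swap_aux h v, Equiv.Perm.sign_swap h, det_one_updateColumn] at hdet
        simp only [Units.val_neg, Units.val_one, Int.cast_neg, Int.cast_one, neg_mul,
          one_mul] at hdet
        linear_combination hdet
      · rw [if_neg ha1]
        apply Matrix.det_zero_of_column_eq (Ne.symm ha2)
        intro k
        rw [Matrix.updateCol_self, Matrix.updateCol_ne ha2,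
          Matrix.updateCol_ne ha1]
        simp [Pi.single_apply, one_apply, eq_comm]
  calc ∑ a, w a * (((1 : Matrix (Fin n') (Fin n') S).updateCol c1 v).updateCol c2
          (Pi.single a 1)).det
      = ∑ a : Fin n', ((if a = c2 then w a * v c1 else 0) + (if a = c1 then -(w a * v c2) else 0)) := by
        refine Finset.sum_congr rfl fun a _ => ?_
        rw [base a]
        split_ifs with h1 h2 <;> try subst h1
        · exact absurd h2.symm h
        · ring
        · ring
        · ring
    _ = v c1 * w c2 - v c2 * w c1 := by
        rw [Finset.sum_add_distrib, Finset.sum_ite_eq' Finset.univ c2, Finset.sum_ite_eq'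
          Finset.univ c1]
        simp; ring

lemma swap_aux31 {c1 c2 c3 : Fin n'} (h12 : c1 ≠ c2) (h13 : c1 ≠ c3) (h23 : c2 ≠ c3)
    (v w : Fin n' → S) :
    ((((1 : Matrix (Fin n') (Fin n') S).updateCol c1 v).updateCol c2 w).updateCol c3
        (Pi.single c1 1)).submatrix id ⇑(Equiv.swap c1 c3)
      = ((1 : Matrix (Fin n') (Fin n') S).updateCol c2 w).updateCol c3 v := by
  ext i j
  simp only [submatrix_apply, id_eq, updateCol_apply, Equiv.swap_apply_def]
  split_ifs <;> simp_all [one_apply, Pi.single_apply]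

lemma swap_aux32 {c1 c2 c3 : Fin n'} (h12 : c1 ≠ c2) (h13 : c1 ≠ c3) (h23 : c2 ≠ c3)
    (v w : Fin n' → S) :
    ((((1 : Matrix (Fin n') (Fin n') S).updateCol c1 v).updateCol c2 w).updateCol c3
        (Pi.single c2 1)).submatrix id ⇑(Equiv.swap c2 c3)
      = ((1 : Matrix (Fin n') (Fin n') S).updateCol c1 v).updateCol c3 w := by
  ext i j
  simp only [submatrix_apply, id_eq, updateCol_apply, Equiv.swap_apply_def]
  split_ifs <;> simp_all [one_apply, Pi.single_apply]

lemma det_one_updateColumn_three {c1 c2 c3 : Fin n'} (h12 : c1 ≠ c2) (h13 : c1 ≠ c3)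
    (h23 : c2 ≠ c3) (v w x : Fin n' → S) :
    ((((1 : Matrix (Fin n') (Fin n') S).updateCol c1 v).updateCol c2 w).updateCol c3
        x).det
      = x c3 * (v c1 * w c2 - v c2 * w c1) - x c1 * (w c2 * v c3 - w c3 * v c2)
        - x c2 * (v c1 * w c3 - v c3 * w c1) := by
  rw [det_updateColumn_expand]
  have base : ∀ a : Fin n',
      ((((1 : Matrix (Fin n') (Fin n') S).updateCol c1 v).updateCol c2 w).updateCol c3
          (Pi.single a 1)).det
        = if a = c3 then (v c1 * w c2 - v c2 * w c1)
          else if a = c1 then -(w c2 * v c3 - w c3 * v c2)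
          else if a = c2 then -(v c1 * w c3 - v c3 * w c1) else 0 := by
    intro a
    by_cases ha3 : a = c3
    · subst ha3
      rw [if_pos rfl]
      have hcol : (Pi.single a (1:S) : Fin n' → S)
          = fun j => (((1 : Matrix (Fin n') (Fin n') S).updateCol c1 v).updateCol c2 w) j a := by
        funext j
        rw [Matrix.updateCol_ne h23.symm, Matrix.updateCol_ne h13.symm]
        simp [Pi.single_apply, one_apply]
      rw [hcol, updateCol_eq_self, det_one_updateColumn_two h12]
    · rw [if_neg ha3]
      by_cases ha1 : a = c1
      · subst ha1
        rw [if_pos rfl]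
        have hdet := Matrix.det_permute' (Equiv.swap a c3)
          ((((1 : Matrix (Fin n') (Fin n') S).updateCol a v).updateCol c2 w).updateCol c3
            (Pi.single a 1))
        rw [swap_aux31 h12 h13 h23, Equiv.Perm.sign_swap h13, det_one_updateColumn_two h23] at hdet
        simp only [Units.val_neg, Units.val_one, Int.cast_neg, Int.cast_one, neg_mul,
          one_mul] at hdet
        linear_combination hdet
      · rw [if_neg ha1]
        by_cases ha2 : a = c2
        · subst ha2
          rw [if_pos rfl]
          have hdet := Matrix.det_permute' (Equiv.swap a c3)
            ((((1 : Matrix (Fin n') (Fin n') S).updateCol c1 v).updateCol a w).updateCol c3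
              (Pi.single a 1))
          rw [swap_aux32 h12 h13 h23, Equiv.Perm.sign_swap h23, det_one_updateColumn_two h13]
            at hdet
          simp only [Units.val_neg, Units.val_one, Int.cast_neg, Int.cast_one, neg_mul,
            one_mul] at hdet
          linear_combination hdet
        · rw [if_neg ha2]
          apply Matrix.det_zero_of_column_eq (Ne.symm ha3)
          intro k
          rw [Matrix.updateCol_self, Matrix.updateCol_ne ha3, Matrix.updateCol_ne ha2,
            Matrix.updateCol_ne ha1]
          simp [Pi.single_apply, one_apply, eq_comm]
  calc ∑ a, x a * ((((1 : Matrix (Fin n') (Fin n') S).updateCol c1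
          v).updateCol c2 w).updateCol c3 (Pi.single a 1)).det
      = ∑ a : Fin n', ((if a = c3 then x a * (v c1 * w c2 - v c2 * w c1) else 0)
          + (if a = c1 then -(x a * (w c2 * v c3 - w c3 * v c2)) else 0)
          + (if a = c2 then -(x a * (v c1 * w c3 - v c3 * w c1)) else 0)) := by
        refine Finset.sum_congr rfl fun a _ => ?_
        rw [base a]
        split_ifs with h1 h2 h3 <;> simp_all <;> ring
    _ = _ := by
        rw [Finset.sum_add_distrib, Finset.sum_add_distrib, Finset.sum_ite_eq' Finset.univ c3,
          Finset.sum_ite_eq' Finset.univ c1, Finset.sum_ite_eq' Finset.univ c2]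
        simp only [Finset.mem_univ, if_true]
        ring

lemma mul_updateColumn (M N : Matrix (Fin n') (Fin n') S) (j : Fin n') (w : Fin n' → S) :
    M * (N.updateCol j w) = (M * N).updateCol j (M *ᵥ w) := by
  ext i j'
  by_cases h : j' = j
  · subst h
    simp [mul_apply, updateCol_apply, mulVec, dotProduct]
  · simp [mul_apply, updateCol_apply, h]

lemma mulVec_adj_col (M : Matrix (Fin n') (Fin n') S) (c : Fin n') :
    M *ᵥ (fun r => M.adjugate r c) = M.det • (Pi.single c 1 : Fin n' → S) := by
  funext i
  have : (M *ᵥ fun r => M.adjugate r c) i = (M * M.adjugate) i c := by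
    simp [mulVec, dotProduct, mul_apply]
  rw [this, mul_adjugate]
  simp [Pi.single_apply, one_apply, Matrix.smul_apply]

lemma Ioi_eq_filter (k : Fin n') : Finset.Ioi k = Finset.univ.filter (fun l => k < l) := by
  ext l; simp

lemma Iio_eq_filter (k : Fin n') : Finset.Iio k = Finset.univ.filter (fun l => l < k) := by
  ext l; simp

/-- exchange a `t, s < t` double sum into `s, t > s`. -/
lemma sum_Iio_exchange (F : Fin n' → Fin n' → S) :
    ∑ t, ∑ s ∈ Finset.Iio t, F t s = ∑ s, ∑ t ∈ Finset.Ioi s, F t s := by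
  have h1 : ∑ t, ∑ s ∈ Finset.Iio t, F t s = ∑ t, ∑ s, if s < t then F t s else 0 := by
    refine Finset.sum_congr rfl fun t _ => ?_
    rw [Iio_eq_filter, Finset.sum_filter]
  have h2 : ∑ s, ∑ t ∈ Finset.Ioi s, F t s = ∑ s, ∑ t, if s < t then F t s else 0 := by
    refine Finset.sum_congr rfl fun s _ => ?_
    rw [Ioi_eq_filter, Finset.sum_filter]
  rw [h1, h2, Finset.sum_comm]

/-- split a full double sum into upper, lower and diagonal parts. -/
lemma sum_split (F : Fin n' → Fin n' → S) :
    ∑ t, ∑ s, F t s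
      = (∑ t, ∑ s ∈ Finset.Ioi t, F t s) + (∑ t, ∑ s ∈ Finset.Iio t, F t s)
        + ∑ t, F t t := by
  have key : ∀ t : Fin n', ∑ s, F t s
      = (∑ s ∈ Finset.Ioi t, F t s) + ((∑ s ∈ Finset.Iio t, F t s) + F t t) := by
    intro t
    have h1 : ∀ s : Fin n', F t s = (if t < s then F t s else 0)
        + ((if s < t then F t s else 0) + (if s = t then F t s else 0)) := by
      intro s
      rcases lt_trichotomy t s with h | h | h
      · simp [h, not_lt_of_gt h, (ne_of_lt h).symm]
      · simp [h.symm, lt_irrefl]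
      · simp [h, not_lt_of_gt h, ne_of_lt h]
    calc ∑ s, F t s = ∑ s, ((if t < s then F t s else 0)
          + ((if s < t then F t s else 0) + (if s = t then F t s else 0))) :=
        Finset.sum_congr rfl fun s _ => h1 s
      _ = _ := by
        rw [Finset.sum_add_distrib, Finset.sum_add_distrib, Finset.sum_ite_eq' Finset.univ t]
        rw [Ioi_eq_filter, Iio_eq_filter, Finset.sum_filter, Finset.sum_filter]
        simp
  calc ∑ t, ∑ s, F t s = ∑ t, ((∑ s ∈ Finset.Ioi t, F t s)
        + ((∑ s ∈ Finset.Iio t, F t s) + F t t)) := Finset.sum_congr rfl fun t _ => key t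
    _ = _ := by rw [Finset.sum_add_distrib, Finset.sum_add_distrib]; ring

/-- antisymmetrization: a full double sum against an alternating matrix. -/
lemma sum_alt (X : Matrix (Fin n') (Fin n') S) (h1 : ∀ i j, X j i = -X i j)
    (h0 : ∀ i, X i i = 0) (f : Fin n' → Fin n' → S) :
    ∑ t, ∑ s, X t s * f t s = ∑ t, ∑ s ∈ Finset.Ioi t, X t s * (f t s - f s t) := by
  rw [sum_split (fun t s => X t s * f t s)]
  have hdiag : ∑ t : Fin n', X t t * f t t = 0 := by
    refine Finset.sum_eq_zero fun t _ => by rw [h0]; ring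
  have hlow : ∑ t, ∑ s ∈ Finset.Iio t, X t s * f t s
      = -∑ t, ∑ s ∈ Finset.Ioi t, X t s * f s t := by
    rw [sum_Iio_exchange (fun t s => X t s * f t s), ← Finset.sum_neg_distrib]
    refine Finset.sum_congr rfl fun s _ => ?_
    rw [← Finset.sum_neg_distrib]
    refine Finset.sum_congr rfl fun t _ => ?_
    rw [h1 s t]; ring
  rw [hdiag, hlow, add_zero, ← sub_eq_add_neg]
  rw [← Finset.sum_sub_distrib]
  refine Finset.sum_congr rfl fun t _ => ?_
  rw [← Finset.sum_sub_distrib]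
  refine Finset.sum_congr rfl fun s _ => ?_
  ring

lemma mul3_apply (P Q R : Matrix (Fin n') (Fin n') S) (i j : Fin n') :
    (P * Q * R) i j = ∑ t, ∑ s, Q t s * (P i t * R s j) := by
  rw [mul_apply]
  calc ∑ s, (P * Q) i s * R s j = ∑ s, ∑ t, Q t s * (P i t * R s j) := by
        refine Finset.sum_congr rfl fun s _ => ?_
        rw [mul_apply, Finset.sum_mul]
        exact Finset.sum_congr rfl fun t _ => by ring
    _ = _ := Finset.sum_comm

lemma mul_smul_one (a : S) (M : Matrix (Fin n') (Fin n') S) : M * (a • 1) = a • M := by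
  ext i j
  rw [mul_apply, Matrix.smul_apply, smul_eq_mul]
  have hterm : ∀ k, M i k * (a • (1 : Matrix (Fin n') (Fin n') S)) k j
      = if k = j then M i k * a else 0 := by
    intro k
    rw [Matrix.smul_apply, one_apply, smul_eq_mul]
    split_ifs <;> ring
  rw [Finset.sum_congr rfl fun k _ => hterm k, Finset.sum_ite_eq' Finset.univ j]
  simp [mul_comm]

lemma smul_one_mul' (a : S) (M : Matrix (Fin n') (Fin n') S) : (a • 1) * M = a • M := by
  ext i j
  rw [mul_apply, Matrix.smul_apply, smul_eq_mul]
  have hterm : ∀ k, (a • (1 : Matrix (Fin n') (Fin n') S)) i k * M k j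
      = if k = i then a * M k j else 0 := by
    intro k
    rw [Matrix.smul_apply, one_apply, smul_eq_mul]
    by_cases h : i = k
    · rw [if_pos h, if_pos h.symm]; ring
    · rw [if_neg h, if_neg (fun hk => h hk.symm)]; ring
  rw [Finset.sum_congr rfl fun k _ => hterm k, Finset.sum_ite_eq' Finset.univ i]
  simp

lemma map_matrix_smul {R S : Type*} [CommRing R] [CommRing S] (f : R →+* S) (r : R)
    (M : Matrix (Fin n') (Fin n') R) : (r • M).map f = f r • M.map f := by
  ext i j
  simp [map_apply, Matrix.smul_apply, smul_eq_mul, _root_.map_mul]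

lemma map_matrix_inj {R S : Type*} [CommRing R] [CommRing S] {f : R →+* S}
    (hf : Function.Injective f) {M N : Matrix (Fin n') (Fin n') R}
    (h : M.map f = N.map f) : M = N := by
  ext i j
  exact hf (by simpa [map_apply] using congrFun (congrFun h i) j)


section Generic
variable (n : ℕ)

abbrev Rg := MvPolynomial (Fin 3 × Fin n × Fin n) ℤ
abbrev Fg := FractionRing (Rg n)

noncomputable def Ug : Matrix (Fin n) (Fin n) (Rg n) :=
  Matrix.of fun i j => MvPolynomial.X (0, i, j)
noncomputable def φg : Rg n →+* Fg n := algebraMap (Rg n) (Fg n)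
noncomputable def UF : Matrix (Fin n) (Fin n) (Fg n) := (Ug n).map (φg n)

lemma det_Ug_ne_zero : (Ug n).det ≠ 0 := by
  intro h
  have h2 : (MvPolynomial.eval (fun p : Fin 3 × Fin n × Fin n =>
      if p.2.1 = p.2.2 ∧ p.1 = 0 then (1:ℤ) else 0)) (Ug n).det = 1 := by
    rw [RingHom.map_det, RingHom.mapMatrix_apply]
    have : (Ug n).map (MvPolynomial.eval fun p : Fin 3 × Fin n × Fin n =>
        if p.2.1 = p.2.2 ∧ p.1 = 0 then (1:ℤ) else 0) = 1 := by
      ext i j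
      simp [Ug, one_apply]
    rw [this, det_one]
  rw [h] at h2
  simp at h2

lemma φg_injective : Function.Injective (φg n) := IsFractionRing.injective (Rg n) (Fg n)

lemma det_UF_ne_zero : (UF n).det ≠ 0 := by
  have : (UF n).det = φg n (Ug n).det := ((φg n).map_det _).symm
  rw [this]
  intro h
  exact det_Ug_ne_zero n (φg_injective n (by simpa using h))

/-- polynomial quotient of a 2×2 adjugate minor -/
noncomputable def q2 (a b c d : Fin n) : Rg n :=
  ((((Ug n).updateCol a (Pi.single c 1)).updateCol b (Pi.single d 1))).det

lemma map_single (f : Rg n →+* Fg n) (c : Fin n) :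
    (f ∘ (Pi.single c (1 : Rg n) : Fin n → Rg n)) = Pi.single c 1 := by
  funext j
  simp [Pi.single_apply, apply_ite f]

lemma map_q2 (a b c d : Fin n) :
    φg n (q2 n a b c d)
      = ((((UF n).updateCol a (Pi.single c 1)).updateCol b (Pi.single d 1))).det := by
  rw [q2, RingHom.map_det, RingHom.mapMatrix_apply]
  congr 1
  rw [Matrix.map_updateCol, Matrix.map_updateCol, map_single, map_single]
  rfl

/-- **F1**: 2×2 minors of the adjugate are `det • q2`. -/
lemma F1 {a b : Fin n} (h : a ≠ b) (c d : Fin n) :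
    (UF n).adjugate a c * (UF n).adjugate b d - (UF n).adjugate a d * (UF n).adjugate b c
      = (UF n).det * φg n (q2 n a b c d) := by
  have hβ : (UF n).det ≠ 0 := det_UF_ne_zero n
  have hdetX : (((1 : Matrix (Fin n) (Fin n) (Fg n)).updateCol a
        (fun r => (UF n).adjugate r c)).updateCol b (fun r => (UF n).adjugate r d)).det
      = (UF n).adjugate a c * (UF n).adjugate b d - (UF n).adjugate b c * (UF n).adjugate a d :=
    det_one_updateColumn_two h _ _
  have hUX : UF n * (((1 : Matrix (Fin n) (Fin n) (Fg n)).updateCol a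
        (fun r => (UF n).adjugate r c)).updateCol b (fun r => (UF n).adjugate r d))
      = ((UF n).updateCol a ((UF n).det • Pi.single c 1)).updateCol b
        ((UF n).det • Pi.single d 1) := by
    rw [mul_updateColumn, mul_updateColumn, mul_one, mulVec_adj_col, mulVec_adj_col]
  have hdet2 : (((UF n).updateCol a ((UF n).det • (Pi.single c 1 : Fin n → Fg n))).updateCol b
        ((UF n).det • (Pi.single d 1 : Fin n → Fg n))).det
      = (UF n).det * ((UF n).det * ((((UF n).updateCol a (Pi.single c 1)).updateCol b
        (Pi.single d 1))).det) := by
    rw [det_updateCol_smul, updateColumn_comm h, det_updateCol_smul,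
      updateColumn_comm h.symm]
  have hdm := det_mul (UF n) (((1 : Matrix (Fin n) (Fin n) (Fg n)).updateCol a
        (fun r => (UF n).adjugate r c)).updateCol b (fun r => (UF n).adjugate r d))
  rw [hUX, hdet2] at hdm
  rw [hdetX] at hdm
  have hcanc := mul_left_cancel₀ hβ hdm.symm
  rw [map_q2]
  linear_combination hcanc

noncomputable def q3 (a b c i t s : Fin n) : Rg n :=
  (((((Ug n).updateCol a (Pi.single i 1)).updateCol b (Pi.single t 1))).updateCol c
    (Pi.single s 1)).det

lemma map_q3 (a b c i t s : Fin n) :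
    φg n (q3 n a b c i t s)
      = (((((UF n).updateCol a (Pi.single i 1)).updateCol b
          (Pi.single t 1))).updateCol c (Pi.single s 1)).det := by
  rw [q3, RingHom.map_det, RingHom.mapMatrix_apply]
  congr 1
  rw [Matrix.map_updateCol, Matrix.map_updateCol, Matrix.map_updateCol,
    map_single, map_single, map_single]
  rfl

/-- **F2**: 3×3 minors of the adjugate are `det² • q3`. -/
lemma F2 {a b c : Fin n} (hab : a ≠ b) (hac : a ≠ c) (hbc : b ≠ c) (i t s : Fin n) :
    (UF n).adjugate c s * ((UF n).adjugate a i * (UF n).adjugate b t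
        - (UF n).adjugate b i * (UF n).adjugate a t)
      - (UF n).adjugate a s * ((UF n).adjugate b t * (UF n).adjugate c i
        - (UF n).adjugate c t * (UF n).adjugate b i)
      - (UF n).adjugate b s * ((UF n).adjugate a i * (UF n).adjugate c t
        - (UF n).adjugate c i * (UF n).adjugate a t)
      = (UF n).det ^ 2 * φg n (q3 n a b c i t s) := by
  have hβ : (UF n).det ≠ 0 := det_UF_ne_zero n
  have hdetX : ((((1 : Matrix (Fin n) (Fin n) (Fg n)).updateCol a
        (fun r => (UF n).adjugate r i)).updateCol b
        (fun r => (UF n).adjugate r t)).updateCol c (fun r => (UF n).adjugate r s)).det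
      = (UF n).adjugate c s * ((UF n).adjugate a i * (UF n).adjugate b t
          - (UF n).adjugate b i * (UF n).adjugate a t)
        - (UF n).adjugate a s * ((UF n).adjugate b t * (UF n).adjugate c i
          - (UF n).adjugate c t * (UF n).adjugate b i)
        - (UF n).adjugate b s * ((UF n).adjugate a i * (UF n).adjugate c t
          - (UF n).adjugate c i * (UF n).adjugate a t) :=
    det_one_updateColumn_three hab hac hbc _ _ _
  have hUX : UF n * ((((1 : Matrix (Fin n) (Fin n) (Fg n)).updateCol a
        (fun r => (UF n).adjugate r i)).updateCol b
        (fun r => (UF n).adjugate r t)).updateCol c (fun r => (UF n).adjugate r s))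
      = (((UF n).updateCol a ((UF n).det • Pi.single i 1)).updateCol b
        ((UF n).det • Pi.single t 1)).updateCol c ((UF n).det • Pi.single s 1) := by
    rw [mul_updateColumn, mul_updateColumn, mul_updateColumn, mul_one, mulVec_adj_col,
      mulVec_adj_col, mulVec_adj_col]
  have hdet2 : ((((UF n).updateCol a ((UF n).det • (Pi.single i 1 : Fin n → Fg n))).updateCol b
        ((UF n).det • (Pi.single t 1 : Fin n → Fg n))).updateCol c
        ((UF n).det • (Pi.single s 1 : Fin n → Fg n))).det
      = (UF n).det * ((UF n).det * ((UF n).det * (((((UF n).updateCol a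
          (Pi.single i 1)).updateCol b (Pi.single t 1))).updateCol c
          (Pi.single s 1)).det)) := by
    rw [det_updateCol_smul]
    rw [updateColumn_comm hbc]
    rw [det_updateCol_smul]
    rw [updateColumn_comm hac]
    rw [updateColumn_comm hab]
    rw [det_updateCol_smul]
    rw [updateColumn_comm hab.symm]
    rw [updateColumn_comm hac.symm]
    rw [updateColumn_comm hbc.symm]
  have hdm := det_mul (UF n) ((((1 : Matrix (Fin n) (Fin n) (Fg n)).updateCol a
        (fun r => (UF n).adjugate r i)).updateCol b
        (fun r => (UF n).adjugate r t)).updateCol c (fun r => (UF n).adjugate r s))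
  rw [hUX, hdet2, hdetX] at hdm
  have hcanc := mul_left_cancel₀ hβ hdm.symm
  rw [map_q3]
  linear_combination hcanc

noncomputable def c0 (k l i t s j : Fin n) : Rg n :=
  if j = k ∨ j = l then 0 else q3 n k l j i t s

/-- **F3**: the key three-term congruence. -/
lemma F3 {k l : Fin n} (h : k ≠ l) (i t s j : Fin n) :
    φg n (q2 n k l i t) * (UF n).adjugate j s - φg n (q2 n k l i s) * (UF n).adjugate j t
        - φg n (q2 n k l s t) * (UF n).adjugate j i
      = (UF n).det * φg n (c0 n k l i t s j) := by
  have hβ : (UF n).det ≠ 0 := det_UF_ne_zero n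
  have e1 := F1 n h i t
  have e2 := F1 n h i s
  have e3 := F1 n h s t
  by_cases hjk : j = k
  · rw [c0, if_pos (Or.inl hjk), map_zero, mul_zero, hjk]
    apply mul_left_cancel₀ hβ
    rw [mul_zero]
    linear_combination -((UF n).adjugate k s * e1) + (UF n).adjugate k t * e2
      + (UF n).adjugate k i * e3
  · by_cases hjl : j = l
    · rw [c0, if_pos (Or.inr hjl), map_zero, mul_zero, hjl]
      apply mul_left_cancel₀ hβ
      rw [mul_zero]
      linear_combination -((UF n).adjugate l s * e1) + (UF n).adjugate l t * e2
        + (UF n).adjugate l i * e3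
    · have hc : c0 n k l i t s j = q3 n k l j i t s := by
        rw [c0, if_neg (by tauto)]
      rw [hc]
      have e4 := F2 n h (Ne.symm hjk) (Ne.symm hjl) i t s
      apply mul_left_cancel₀ hβ
      linear_combination -((UF n).adjugate j s * e1) + (UF n).adjugate j t * e2
        + (UF n).adjugate j i * e3 + e4

/-- **F4**: left-multiplication structure of the `q2` matrix. -/
lemma F4 {k l : Fin n} (h : k ≠ l) (x y : Fin n) :
    ∑ z, UF n z x * φg n (q2 n k l z y)
      = (if k = x then (UF n).adjugate l y else 0)
        - (if l = x then (UF n).adjugate k y else 0) := by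
  have hβ : (UF n).det ≠ 0 := det_UF_ne_zero n
  apply mul_left_cancel₀ hβ
  rw [Finset.mul_sum]
  have step : ∀ z : Fin n, (UF n).det * (UF n z x * φg n (q2 n k l z y))
      = (UF n).adjugate k z * UF n z x * (UF n).adjugate l y
        - (UF n).adjugate l z * UF n z x * (UF n).adjugate k y := by
    intro z
    have e := F1 n h z y
    linear_combination -(UF n z x) * e
  rw [Finset.sum_congr rfl fun z _ => step z, Finset.sum_sub_distrib, ← Finset.sum_mul,
    ← Finset.sum_mul]
  have hBU : ∀ w : Fin n, (∑ z, (UF n).adjugate w z * UF n z x)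
      = (UF n).det * (if w = x then 1 else 0) := by
    intro w
    have : (∑ z, (UF n).adjugate w z * UF n z x) = ((UF n).adjugate * UF n) w x := by
      rw [mul_apply]
    rw [this, adjugate_mul]
    simp [one_apply]
  rw [hBU k, hBU l]
  split_ifs <;> ring

/-- generic alternating matrices (m = 1, 2). -/
noncomputable def Am (m : Fin 3) : Matrix (Fin n) (Fin n) (Rg n) :=
  Matrix.of fun i j =>
    if i < j then MvPolynomial.X (m, i, j)
    else if j < i then -MvPolynomial.X (m, j, i) else 0

lemma Am_alt (m : Fin 3) (i j : Fin n) : Am n m j i = -Am n m i j := by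
  simp only [Am, of_apply]
  rcases lt_trichotomy i j with h | h | h
  · rw [if_neg (asymm h), if_pos h, if_pos h]
  · subst h; simp [lt_irrefl]
  · rw [if_pos h, if_neg (asymm h), if_pos h, neg_neg]

lemma Am_diag (m : Fin 3) (i : Fin n) : Am n m i i = 0 := by
  simp [Am, lt_irrefl]

noncomputable def AF (m : Fin 3) : Matrix (Fin n) (Fin n) (Fg n) := (Am n m).map (φg n)

lemma AF_alt (m : Fin 3) (i j : Fin n) : AF n m j i = -AF n m i j := by
  simp only [AF, map_apply, Am_alt n m i j, map_neg]

lemma AF_diag (m : Fin 3) (i : Fin n) : AF n m i i = 0 := by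
  simp only [AF, map_apply, Am_diag, map_zero]

noncomputable def Bp : Matrix (Fin n) (Fin n) (Rg n) :=
  Matrix.of fun i t => ∑ k, ∑ l ∈ Finset.Ioi k, Am n 1 k l * q2 n k l i t

noncomputable def BpF : Matrix (Fin n) (Fin n) (Fg n) := (Bp n).map (φg n)

lemma BpF_apply (i t : Fin n) :
    BpF n i t = ∑ k, ∑ l ∈ Finset.Ioi k, AF n 1 k l * φg n (q2 n k l i t) := by
  simp only [BpF, AF, map_apply, Bp, of_apply, map_sum, _root_.map_mul]

/-- **F5**: `A * adj U = Uᵀ * Bp`. -/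
lemma F5 : (UF n)ᵀ * BpF n = AF n 1 * (UF n).adjugate := by
  ext x y
  rw [mul_apply, mul_apply]
  calc ∑ z, (UF n)ᵀ x z * BpF n z y
      = ∑ k, ∑ l ∈ Finset.Ioi k, AF n 1 k l * ∑ z, UF n z x * φg n (q2 n k l z y) := by
        simp only [transpose_apply, BpF_apply, Finset.mul_sum]
        rw [Finset.sum_comm]
        refine Finset.sum_congr rfl fun k _ => ?_
        rw [Finset.sum_comm]
        refine Finset.sum_congr rfl fun l _ => ?_
        exact Finset.sum_congr rfl fun z _ => by ring
    _ = ∑ k, ∑ l ∈ Finset.Ioi k, ((if k = x then AF n 1 k l * (UF n).adjugate l y else 0)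
          - (if l = x then AF n 1 k l * (UF n).adjugate k y else 0)) := by
        refine Finset.sum_congr rfl fun k _ => Finset.sum_congr rfl fun l hl => ?_
        rw [F4 n (ne_of_lt (Finset.mem_Ioi.mp hl)) x y]
        split_ifs <;> ring
    _ = (∑ l ∈ Finset.Ioi x, AF n 1 x l * (UF n).adjugate l y)
          - ∑ k, (if k < x then AF n 1 k x * (UF n).adjugate k y else 0) := by
        have hsplit : ∀ k : Fin n, (∑ l ∈ Finset.Ioi k,
            ((if k = x then AF n 1 k l * (UF n).adjugate l y else 0)
              - (if l = x then AF n 1 k l * (UF n).adjugate k y else 0)))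
            = (∑ l ∈ Finset.Ioi k, (if k = x then AF n 1 k l * (UF n).adjugate l y else 0))
              - (∑ l ∈ Finset.Ioi k, (if l = x then AF n 1 k l * (UF n).adjugate k y else 0)) :=
          fun k => Finset.sum_sub_distrib _ _
        rw [Finset.sum_congr rfl fun k _ => hsplit k, Finset.sum_sub_distrib]
        congr 1
        · have h1 : ∀ k : Fin n, (∑ l ∈ Finset.Ioi k,
              (if k = x then AF n 1 k l * (UF n).adjugate l y else 0))
              = (if k = x then ∑ l ∈ Finset.Ioi k, AF n 1 k l * (UF n).adjugate l y else 0) := by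
            intro k
            split_ifs with h
            · rfl
            · exact Finset.sum_const_zero
          rw [Finset.sum_congr rfl fun k _ => h1 k, Finset.sum_ite_eq' Finset.univ x]
          simp
        · refine Finset.sum_congr rfl fun k _ => ?_
          rw [Finset.sum_ite_eq' (Finset.Ioi k) x]
          simp only [Finset.mem_Ioi]
    _ = ∑ m, AF n 1 x m * (UF n).adjugate m y := by
        have htri : ∀ m : Fin n, AF n 1 x m * (UF n).adjugate m y
            = (if x < m then AF n 1 x m * (UF n).adjugate m y else 0)
              + ((if m < x then AF n 1 x m * (UF n).adjugate m y else 0)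
                + (if m = x then AF n 1 x m * (UF n).adjugate m y else 0)) := by
          intro m
          rcases lt_trichotomy x m with h | h | h
          · simp [h, not_lt_of_gt h, (ne_of_lt h).symm]
          · subst h; simp [lt_irrefl]
          · simp [h, not_lt_of_gt h, ne_of_lt h]
        have expand : ∑ m, AF n 1 x m * (UF n).adjugate m y
            = (∑ m, (if x < m then AF n 1 x m * (UF n).adjugate m y else 0))
              + ((∑ m, (if m < x then AF n 1 x m * (UF n).adjugate m y else 0))
                + AF n 1 x x * (UF n).adjugate x y) := by
          rw [Finset.sum_congr rfl fun m _ => htri m, Finset.sum_add_distrib,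
            Finset.sum_add_distrib, Finset.sum_ite_eq' Finset.univ x]
          simp
        rw [expand]
        have hIoi : (∑ m ∈ Finset.Ioi x, AF n 1 x m * (UF n).adjugate m y)
            = ∑ m, (if x < m then AF n 1 x m * (UF n).adjugate m y else 0) := by
          rw [Ioi_eq_filter, Finset.sum_filter]
        rw [hIoi, AF_diag]
        have halt : ∀ m : Fin n, (if m < x then AF n 1 x m * (UF n).adjugate m y else 0)
            = -(if m < x then AF n 1 m x * (UF n).adjugate m y else 0) := by
          intro m
          rw [AF_alt]
          split_ifs <;> ring
        rw [Finset.sum_congr rfl fun m _ => halt m, Finset.sum_neg_distrib]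
        ring

noncomputable def c0s (i t s j : Fin n) : Rg n :=
  ∑ k, ∑ l ∈ Finset.Ioi k, Am n 1 k l * c0 n k l i t s j

noncomputable def rP : Rg n := ∑ t, ∑ s ∈ Finset.Ioi t, Am n 2 t s * Bp n s t

noncomputable def CP : Matrix (Fin n) (Fin n) (Rg n) :=
  Matrix.of fun i j => ∑ t, ∑ s ∈ Finset.Ioi t, Am n 2 t s * c0s n i t s j

noncomputable def CPF : Matrix (Fin n) (Fin n) (Fg n) := (CP n).map (φg n)

lemma c0sF_apply (i t s j : Fin n) :
    φg n (c0s n i t s j) = ∑ k, ∑ l ∈ Finset.Ioi k, AF n 1 k l * φg n (c0 n k l i t s j) := by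
  simp only [c0s, AF, map_apply, map_sum, _root_.map_mul]

lemma rPF : φg n (rP n) = ∑ t, ∑ s ∈ Finset.Ioi t, AF n 2 t s * BpF n s t := by
  simp only [rP, AF, BpF, map_apply, map_sum, _root_.map_mul]

lemma CPF_apply (i j : Fin n) :
    CPF n i j = ∑ t, ∑ s ∈ Finset.Ioi t, AF n 2 t s * φg n (c0s n i t s j) := by
  simp only [CPF, CP, AF, map_apply, of_apply, map_sum, _root_.map_mul]

/-- inner congruence, summed over the first alternating matrix -/
lemma key_inner (i j t s : Fin n) :
    BpF n i t * (UF n).adjugate j s - BpF n i s * (UF n).adjugate j t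
      = BpF n s t * (UF n).adjugate j i + (UF n).det * φg n (c0s n i t s j) := by
  rw [BpF_apply n i t, BpF_apply n i s, BpF_apply n s t, c0sF_apply,
    Finset.sum_mul, Finset.sum_mul, Finset.sum_mul, Finset.mul_sum,
    ← Finset.sum_sub_distrib, ← Finset.sum_add_distrib]
  refine Finset.sum_congr rfl fun k _ => ?_
  rw [Finset.sum_mul, Finset.sum_mul, Finset.sum_mul, Finset.mul_sum,
    ← Finset.sum_sub_distrib, ← Finset.sum_add_distrib]
  refine Finset.sum_congr rfl fun l hl => ?_
  have e := F3 n (ne_of_lt (Finset.mem_Ioi.mp hl)) i t s j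
  linear_combination AF n 1 k l * e

/-- **F6a** entrywise -/
lemma F6a : BpF n * AF n 2 * ((UF n).adjugate)ᵀ
    = φg n (rP n) • ((UF n).adjugate)ᵀ + (UF n).det • CPF n := by
  ext i j
  rw [mul3_apply, Matrix.add_apply, Matrix.smul_apply, Matrix.smul_apply, transpose_apply, smul_eq_mul,
    smul_eq_mul, CPF_apply, rPF]
  calc ∑ t, ∑ s, AF n 2 t s * (BpF n i t * ((UF n).adjugate)ᵀ s j)
      = ∑ t, ∑ s, AF n 2 t s * (BpF n i t * (UF n).adjugate j s) := by
        simp only [transpose_apply]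
    _ = ∑ t, ∑ s ∈ Finset.Ioi t, AF n 2 t s
          * (BpF n i t * (UF n).adjugate j s - BpF n i s * (UF n).adjugate j t) :=
        sum_alt (AF n 2) (AF_alt n 2) (AF_diag n 2) _
    _ = ∑ t, ∑ s ∈ Finset.Ioi t, (AF n 2 t s * BpF n s t * (UF n).adjugate j i
          + (UF n).det * (AF n 2 t s * φg n (c0s n i t s j))) := by
        refine Finset.sum_congr rfl fun t _ => Finset.sum_congr rfl fun s _ => ?_
        rw [key_inner]
        ring
    _ = (∑ t, ∑ s ∈ Finset.Ioi t, AF n 2 t s * BpF n s t) * (UF n).adjugate j i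
          + (UF n).det * ∑ t, ∑ s ∈ Finset.Ioi t, AF n 2 t s * φg n (c0s n i t s j) := by
        rw [Finset.sum_mul, Finset.mul_sum, ← Finset.sum_add_distrib]
        refine Finset.sum_congr rfl fun t _ => ?_
        rw [Finset.sum_mul, Finset.mul_sum, ← Finset.sum_add_distrib]

/-- **F6b**: dividing by `Bᵀ`. -/
lemma F6b : BpF n * AF n 2 = φg n (rP n) • 1 + CPF n * (UF n)ᵀ := by
  have hβ : (UF n).det ≠ 0 := det_UF_ne_zero n
  have hBdet : (((UF n).adjugate)ᵀ).det ≠ 0 := by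
    rw [det_transpose, det_adjugate]
    exact pow_ne_zero _ hβ
  have hBunit : IsUnit (((UF n).adjugate)ᵀ).det := isUnit_iff_ne_zero.mpr hBdet
  have hmul : (BpF n * AF n 2) * ((UF n).adjugate)ᵀ
      = (φg n (rP n) • 1 + CPF n * (UF n)ᵀ) * ((UF n).adjugate)ᵀ := by
    rw [F6a]
    have hUB : (UF n)ᵀ * ((UF n).adjugate)ᵀ = (UF n).det • 1 := by
      rw [← transpose_mul, adjugate_mul, transpose_smul, transpose_one]
    rw [add_mul, smul_one_mul', Matrix.mul_assoc, hUB, mul_smul_one]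
  calc BpF n * AF n 2
      = (BpF n * AF n 2) * (((UF n).adjugate)ᵀ * (((UF n).adjugate)ᵀ)⁻¹) := by
        rw [Matrix.mul_nonsing_inv _ hBunit, Matrix.mul_one]
    _ = (φg n (rP n) • 1 + CPF n * (UF n)ᵀ) * (((UF n).adjugate)ᵀ * (((UF n).adjugate)ᵀ)⁻¹) := by
        rw [← Matrix.mul_assoc, hmul, Matrix.mul_assoc]
    _ = _ := by rw [Matrix.mul_nonsing_inv _ hBunit, Matrix.mul_one]

/-- **F7**: the final identity over the generic fraction field. -/
lemma F7 : AF n 1 * (UF n).adjugate * AF n 2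
    = φg n (rP n) • (UF n)ᵀ + (UF n)ᵀ * CPF n * (UF n)ᵀ := by
  rw [← F5, Matrix.mul_assoc, F6b, Matrix.mul_add, mul_smul_one, ← Matrix.mul_assoc]

/-- **R7**: the final identity over the generic polynomial ring. -/
lemma R7 : Am n 1 * (Ug n).adjugate * Am n 2
    = rP n • (Ug n)ᵀ + (Ug n)ᵀ * CP n * (Ug n)ᵀ := by
  have hinj : Function.Injective (φg n) := IsFractionRing.injective (Rg n) (Fg n)
  apply map_matrix_inj hinj
  have hmapmul : ∀ M N : Matrix (Fin n) (Fin n) (Rg n),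
      (M * N).map (φg n) = M.map (φg n) * N.map (φg n) := by
    intro M N
    rw [← RingHom.mapMatrix_apply, ← RingHom.mapMatrix_apply, ← RingHom.mapMatrix_apply,
      _root_.map_mul]
  have hadj : ((Ug n).adjugate).map (φg n) = (UF n).adjugate := by
    rw [← RingHom.mapMatrix_apply, RingHom.map_adjugate, UF, RingHom.mapMatrix_apply]
  have hadd : ∀ M N : Matrix (Fin n) (Fin n) (Rg n),
      (M + N).map (φg n) = M.map (φg n) + N.map (φg n) := by
    intro M N
    ext i j
    simp [map_apply]
  rw [hmapmul, hmapmul, hadj, hadd, hmapmul, hmapmul, map_matrix_smul,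
    Matrix.transpose_map]
  exact F7 n


end Generic

theorem statement4_impl (K : Type*) [CommRing K] (n : ℕ)
    (U A A' : Matrix (Fin n) (Fin n) K)
    (hAalt : Aᵀ = -A ∧ ∀ i, A i i = 0)
    (hA'alt : A'ᵀ = -A' ∧ ∀ i, A' i i = 0) :
    (∃ (r : K) (C : Matrix (Fin n) (Fin n) K),
      A * U.adjugate * A' = r • Uᵀ + Uᵀ * C * Uᵀ) ∧
    (∃ P : Matrix (Fin n) (Fin n) K, A * U.adjugate * A' = Uᵀ * P) ∧
    (∃ Q : Matrix (Fin n) (Fin n) K, A * U.adjugate * A' = Q * Uᵀ) := by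
  classical
  -- the specialization homomorphism
  set ψ : Rg n →+* K := MvPolynomial.eval₂Hom (Int.castRingHom K)
    (fun p : Fin 3 × Fin n × Fin n =>
      if p.1 = 0 then U p.2.1 p.2.2 else if p.1 = 1 then A p.2.1 p.2.2 else A' p.2.1 p.2.2)
    with hψ
  have hU : (Ug n).map ψ = U := by
    ext i j
    simp [Ug, map_apply, hψ]
  have hA : (Am n 1).map ψ = A := by
    ext i j
    rcases lt_trichotomy i j with h | h | h
    · simp [Am, map_apply, h, hψ]
    · subst h
      simp [Am, map_apply, lt_irrefl, hAalt.2 i]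
    · have h3 : A i j = -A j i := by
        have := congrFun (congrFun hAalt.1 j) i
        simpa [transpose_apply, neg_apply] using this
      simp [Am, map_apply, h, asymm h, hψ, h3]
  have hA' : (Am n 2).map ψ = A' := by
    ext i j
    rcases lt_trichotomy i j with h | h | h
    · simp [Am, map_apply, h, hψ]
    · subst h
      simp [Am, map_apply, lt_irrefl, hA'alt.2 i]
    · have h3 : A' i j = -A' j i := by
        have := congrFun (congrFun hA'alt.1 j) i
        simpa [transpose_apply, neg_apply] using this
      simp [Am, map_apply, h, asymm h, hψ, h3]
  -- transfer the generic identity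
  have hmapmul : ∀ M N : Matrix (Fin n) (Fin n) (Rg n),
      (M * N).map ψ = M.map ψ * N.map ψ := by
    intro M N
    rw [← RingHom.mapMatrix_apply, ← RingHom.mapMatrix_apply, ← RingHom.mapMatrix_apply,
      _root_.map_mul]
  have hadj : ((Ug n).adjugate).map ψ = U.adjugate := by
    rw [← RingHom.mapMatrix_apply, RingHom.map_adjugate, RingHom.mapMatrix_apply, hU]
  have hadd : ∀ M N : Matrix (Fin n) (Fin n) (Rg n),
      (M + N).map ψ = M.map ψ + N.map ψ := by
    intro M N
    ext i j
    simp [map_apply]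
  have key : A * U.adjugate * A' = ψ (rP n) • Uᵀ + Uᵀ * ((CP n).map ψ) * Uᵀ := by
    have := congrArg (fun M : Matrix (Fin n) (Fin n) (Rg n) => M.map ψ) (R7 n)
    rw [hmapmul, hmapmul, hadj, hA, hA', hadd, hmapmul, hmapmul, map_matrix_smul,
      Matrix.transpose_map, hU] at this
    exact this
  refine ⟨⟨ψ (rP n), (CP n).map ψ, key⟩, ?_, ?_⟩
  · refine ⟨ψ (rP n) • 1 + (CP n).map ψ * Uᵀ, ?_⟩
    rw [key, Matrix.mul_add, mul_smul_one, ← Matrix.mul_assoc]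
  · refine ⟨ψ (rP n) • 1 + Uᵀ * (CP n).map ψ, ?_⟩
    rw [key, Matrix.add_mul, smul_one_mul', Matrix.mul_assoc]


end Stmt4

open Matrix

/-- Let `U`, `A`, `A'` be `n × n` matrices over a commutative ring `K`, with
`A` and `A'` alternating.  Then there exist an element `r ∈ K` and an `n × n` matrix `C` over
`K` such that `A * adjugate U * A' = r • Uᵀ + Uᵀ * C * Uᵀ`.  In particular, `A * adjugate U * A'`
is both left- and right-divisible by `Uᵀ`. -/
theorem statement4 (K : Type*) [CommRing K] (n : ℕ)
    (U A A' : Matrix (Fin n) (Fin n) K)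
    (hAalt : Aᵀ = -A ∧ ∀ i, A i i = 0)
    (hA'alt : A'ᵀ = -A' ∧ ∀ i, A' i i = 0) :
    (∃ (r : K) (C : Matrix (Fin n) (Fin n) K),
      A * U.adjugate * A' = r • Uᵀ + Uᵀ * C * Uᵀ) ∧
    (∃ P : Matrix (Fin n) (Fin n) K, A * U.adjugate * A' = Uᵀ * P) ∧
    (∃ Q : Matrix (Fin n) (Fin n) K, A * U.adjugate * A' = Q * Uᵀ) :=
  Stmt4.statement4_impl K n U A A' hAalt hA'alt
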